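/- Let a, c ∈ ℤ^d with ‖c-a‖_2^2 in [μ/4 - 2d, μ/4 + 2d], where μ = d(r^2-1)/6. Then every lattice point b ∈ ℤ^d satisfying both ‖b-c‖_2^2 ∈ [μ/4 - 2d, μ/4 + 2d] and ‖b-a‖_2^2 ∈ [μ - d, μ + d] has the form b = a + 2(c-a) + w with ∑_i w_i^2 ≤ 9d. Consequently (for even d ≥ 2) the number of such b is less than 15^d. -/

import Mathlib

open Finset

private lemma aux_prod_zpow {ι : Type*} (q : ℝ) (hq : q ≠ 0) (s : Finset ι) (e : ι → ℤ) :
    ∏ i ∈ s, q ^ (e i) = q ^ (∑ i ∈ s, e i) := by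
  classical
  induction s using Finset.induction with
  | empty => simp
  | insert _ _ h ih => rw [Finset.prod_insert h, Finset.sum_insert h, ih, zpow_add₀ hq]

private lemma aux_tail (q : ℝ) (h0 : 0 < q) (h1 : q < 1) (n : ℕ) :
    ∑ k ∈ Icc (-(2 + (n:ℤ))) (2 + (n:ℤ)), q ^ (k ^ 2 - 9) ≤
      (q ^ (-9:ℤ) + 2 * q ^ (-8:ℤ) + 2 * q ^ (-5:ℤ)) + 2 * (1 - (q^7)^n) / (1 - q^7) := by
  induction n with
  | zero =>
      have h : Icc (-(2 + ((0:ℕ):ℤ))) (2 + ((0:ℕ):ℤ)) = ({-2, -1, 0, 1, 2} : Finset ℤ) := by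
        decide
      rw [h]
      rw [show ({-2, -1, 0, 1, 2} : Finset ℤ) = insert (-2) (insert (-1) (insert 0 (insert 1 {2}))) from rfl]
      rw [Finset.sum_insert (by decide), Finset.sum_insert (by decide),
        Finset.sum_insert (by decide), Finset.sum_insert (by decide), Finset.sum_singleton]
      norm_num
      ring_nf
      norm_num
  | succ n ih =>
      have hins : Icc (-(2 + ((n+1:ℕ):ℤ))) (2 + ((n+1:ℕ):ℤ)) =
          insert (-(3 + (n:ℤ))) (insert (3 + (n:ℤ)) (Icc (-(2 + (n:ℤ))) (2 + (n:ℤ)))) := by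
        ext k
        simp only [Finset.mem_Icc, Finset.mem_insert]
        push_cast
        omega
      have hmem1 : (-(3 + (n:ℤ))) ∉ insert (3 + (n:ℤ)) (Icc (-(2 + (n:ℤ))) (2 + (n:ℤ))) := by
        simp only [Finset.mem_insert, Finset.mem_Icc]
        omega
      have hmem2 : (3 + (n:ℤ)) ∉ Icc (-(2 + (n:ℤ))) (2 + (n:ℤ)) := by
        simp only [Finset.mem_Icc]; omega
      rw [hins, Finset.sum_insert hmem1, Finset.sum_insert hmem2]
      have hexp : (7 : ℤ) * n ≤ (3 + (n:ℤ))^2 - 9 := by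
        nlinarith [sq_nonneg (n:ℤ), Int.natCast_nonneg n]
      have hb1 : q ^ ((-(3 + (n:ℤ)))^2 - 9) ≤ (q^7)^n := by
        have he : ((-(3 + (n:ℤ)))^2 - 9) = (3 + (n:ℤ))^2 - 9 := by ring
        rw [he, ← zpow_natCast (q^7) n, ← zpow_natCast q 7, ← zpow_mul]
        exact zpow_le_zpow_right_of_le_one₀ h0 h1.le (by exact_mod_cast hexp)
      have hb2 : q ^ ((3 + (n:ℤ))^2 - 9) ≤ (q^7)^n := by
        rw [← zpow_natCast (q^7) n, ← zpow_natCast q 7, ← zpow_mul]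
        exact zpow_le_zpow_right_of_le_one₀ h0 h1.le (by exact_mod_cast hexp)
      have hden : 0 < 1 - q^7 := by
        have : q ^ 7 < 1 := pow_lt_one₀ h0.le h1 (by norm_num)
        linarith
      have hrhs : 2 * (1 - (q^7)^(n+1)) / (1 - q^7) =
          2 * (1 - (q^7)^n) / (1 - q^7) + 2 * (q^7)^n := by
        field_simp
        ring
      rw [hrhs]
      linarith

theorem few_third_vertices_AC (r d : ℕ) (hr : 0 < r) (hd : 2 ≤ d) (hde : Even d)
    (μ : ℝ) (hμ : μ = d * ((r : ℝ) ^ 2 - 1) / 6)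
    (a c : Fin d → ℤ)
    (hac : μ / 4 - 2 * d ≤ (∑ i, ((c i : ℝ) - a i) ^ 2) ∧
           (∑ i, ((c i : ℝ) - a i) ^ 2) ≤ μ / 4 + 2 * d) :
    (∀ b : Fin d → ℤ,
        (μ / 4 - 2 * d ≤ (∑ i, ((b i : ℝ) - c i) ^ 2) ∧
          (∑ i, ((b i : ℝ) - c i) ^ 2) ≤ μ / 4 + 2 * d) →
        (μ - d ≤ (∑ i, ((b i : ℝ) - a i) ^ 2) ∧
          (∑ i, ((b i : ℝ) - a i) ^ 2) ≤ μ + d) →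
        ∃ w : Fin d → ℤ, (∀ i, b i = a i + 2 * (c i - a i) + w i) ∧
          (∑ i, (w i) ^ 2) ≤ 9 * d) ∧
    {b : Fin d → ℤ |
        (μ / 4 - 2 * d ≤ (∑ i, ((b i : ℝ) - c i) ^ 2) ∧
          (∑ i, ((b i : ℝ) - c i) ^ 2) ≤ μ / 4 + 2 * d) ∧
        (μ - d ≤ (∑ i, ((b i : ℝ) - a i) ^ 2) ∧
          (∑ i, ((b i : ℝ) - a i) ^ 2) ≤ μ + d)}.ncard < 15 ^ d := by
  classical
  have hpart1 : ∀ b : Fin d → ℤ,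
      (μ / 4 - 2 * d ≤ (∑ i, ((b i : ℝ) - c i) ^ 2) ∧
        (∑ i, ((b i : ℝ) - c i) ^ 2) ≤ μ / 4 + 2 * d) →
      (μ - d ≤ (∑ i, ((b i : ℝ) - a i) ^ 2) ∧
        (∑ i, ((b i : ℝ) - a i) ^ 2) ≤ μ + d) →
      ∃ w : Fin d → ℤ, (∀ i, b i = a i + 2 * (c i - a i) + w i) ∧
        (∑ i, (w i) ^ 2) ≤ 9 * d := by
    intro b hbc hba
    refine ⟨fun i => b i - a i - 2 * (c i - a i), fun i => by ring, ?_⟩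
    have expand : (∑ i, (((b i - a i - 2 * (c i - a i) : ℤ) : ℝ)) ^ 2)
        = 2 * (∑ i, ((b i : ℝ) - c i) ^ 2) + 2 * (∑ i, ((c i : ℝ) - a i) ^ 2)
          - (∑ i, ((b i : ℝ) - a i) ^ 2) := by
      rw [Finset.mul_sum, Finset.mul_sum, ← Finset.sum_add_distrib, ← Finset.sum_sub_distrib]
      refine Finset.sum_congr rfl fun i _ => ?_
      push_cast
      ring
    have hreal : (∑ i, (((b i - a i - 2 * (c i - a i) : ℤ) : ℝ)) ^ 2) ≤ 9 * d := by
      rw [expand]; linarith [hac.2, hbc.2, hba.1]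
    have hZ : ((∑ i, (b i - a i - 2 * (c i - a i)) ^ 2 : ℤ) : ℝ) ≤ ((9 * d : ℤ) : ℝ) := by
      push_cast
      push_cast at hreal
      linarith
    exact_mod_cast hZ
  refine ⟨hpart1, ?_⟩
  set q : ℝ := 93/100 with hqdef
  have hq0 : (0:ℝ) < q := by norm_num [hqdef]
  have hq1 : q < 1 := by norm_num [hqdef]
  set K : ℤ := 3 * d with hKdef
  set f : (Fin d → ℤ) → (Fin d → ℤ) := fun w i => a i + 2 * (c i - a i) + w i with hfdef
  set S : Finset (Fin d → ℤ) :=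
    (Fintype.piFinset fun _ : Fin d => Icc (-K) K).filter
      (fun w => ∑ i, (w i) ^ 2 ≤ 9 * (d:ℤ)) with hSdef
  have hsubset : {b : Fin d → ℤ |
        (μ / 4 - 2 * d ≤ (∑ i, ((b i : ℝ) - c i) ^ 2) ∧
          (∑ i, ((b i : ℝ) - c i) ^ 2) ≤ μ / 4 + 2 * d) ∧
        (μ - d ≤ (∑ i, ((b i : ℝ) - a i) ^ 2) ∧
          (∑ i, ((b i : ℝ) - a i) ^ 2) ≤ μ + d)} ⊆ ↑(S.image f) := by
    intro b hb
    obtain ⟨w, hw, hwsum⟩ := hpart1 b hb.1 hb.2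
    have hd1 : (1:ℤ) ≤ (d:ℤ) := by exact_mod_cast Nat.one_le_of_lt hd
    have hwmem : w ∈ S := by
      rw [hSdef, Finset.mem_filter, Fintype.mem_piFinset]
      refine ⟨fun i => ?_, hwsum⟩
      have hsq : (w i) ^ 2 ≤ 9 * (d:ℤ) := by
        refine le_trans ?_ hwsum
        exact Finset.single_le_sum (fun j _ => sq_nonneg (w j)) (Finset.mem_univ i)
      rw [Finset.mem_Icc, hKdef]
      constructor
      · nlinarith [sq_nonneg (w i + 3 * (d:ℤ))]
      · nlinarith [sq_nonneg (w i - 3 * (d:ℤ))]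
    refine Finset.mem_coe.mpr (Finset.mem_image.mpr ⟨w, hwmem, ?_⟩)
    funext i
    rw [hfdef]
    exact (hw i).symm
  have hncard : {b : Fin d → ℤ |
        (μ / 4 - 2 * d ≤ (∑ i, ((b i : ℝ) - c i) ^ 2) ∧
          (∑ i, ((b i : ℝ) - c i) ^ 2) ≤ μ / 4 + 2 * d) ∧
        (μ - d ≤ (∑ i, ((b i : ℝ) - a i) ^ 2) ∧
          (∑ i, ((b i : ℝ) - a i) ^ 2) ≤ μ + d)}.ncard ≤ S.card := by
    calc _ ≤ (↑(S.image f) : Set (Fin d → ℤ)).ncard :=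
          Set.ncard_le_ncard hsubset (Finset.finite_toSet _)
      _ = (S.image f).card := Set.ncard_coe_finset _
      _ ≤ S.card := Finset.card_image_le
  have hcard_real : (S.card : ℝ) ≤ (∑ k ∈ Icc (-K) K, q ^ (k ^ 2 - 9)) ^ d := by
    have h1 : (S.card : ℝ) ≤ ∑ w ∈ S, ∏ i, q ^ ((w i) ^ 2 - 9) := by
      calc (S.card : ℝ) = ∑ _w ∈ S, (1:ℝ) := by simp
        _ ≤ ∑ w ∈ S, ∏ i, q ^ ((w i) ^ 2 - 9) := by
          refine Finset.sum_le_sum fun w hw => ?_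
          rw [aux_prod_zpow q (ne_of_gt hq0)]
          refine one_le_zpow_of_nonpos₀ hq0 hq1.le ?_
          rw [hSdef, Finset.mem_filter] at hw
          have h9 := hw.2
          have hsum9 : ∑ i, ((w i) ^ 2 - 9) = (∑ i, (w i)^2) - 9 * (d:ℤ) := by
            rw [Finset.sum_sub_distrib]
            simp [mul_comm]
          rw [hsum9]
          linarith
    have h2 : ∑ w ∈ S, ∏ i, q ^ ((w i) ^ 2 - 9)
        ≤ ∑ w ∈ (Fintype.piFinset fun _ : Fin d => Icc (-K) K), ∏ i, q ^ ((w i) ^ 2 - 9) := by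
      refine Finset.sum_le_sum_of_subset_of_nonneg (Finset.filter_subset _ _) ?_
      intro w _ _
      exact Finset.prod_nonneg fun i _ => le_of_lt (zpow_pos hq0 _)
    have h3 : ∑ w ∈ (Fintype.piFinset fun _ : Fin d => Icc (-K) K), ∏ i, q ^ ((w i) ^ 2 - 9)
        = (∑ k ∈ Icc (-K) K, q ^ (k ^ 2 - 9)) ^ d := by
      calc ∑ w ∈ (Fintype.piFinset fun _ : Fin d => Icc (-K) K), ∏ i, q ^ ((w i) ^ 2 - 9)
          = ∏ _i : Fin d, ∑ k ∈ Icc (-K) K, q ^ (k ^ 2 - 9) :=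
            (Finset.prod_univ_sum (fun _ : Fin d => Icc (-K) K)
              (fun _ k => q ^ (k ^ 2 - 9))).symm
        _ = (∑ k ∈ Icc (-K) K, q ^ (k ^ 2 - 9)) ^ d := by
            rw [Finset.prod_const, Finset.card_univ, Fintype.card_fin]
    linarith
  have h2d : (2:ℕ) ≤ 3 * d := le_trans hd (Nat.le_mul_of_pos_left d (by norm_num))
  have hK26 : K = 2 + ((3 * d - 2 : ℕ) : ℤ) := by
    rw [hKdef, Nat.cast_sub h2d]
    push_cast
    ring
  have hsum_le : (∑ k ∈ Icc (-K) K, q ^ (k ^ 2 - 9)) ≤ 13.4 := by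
    have htail := aux_tail q hq0 hq1 (3 * d - 2)
    rw [← hK26] at htail
    have hgeom : (0:ℝ) ≤ (q^7)^(3*d-2) := by positivity
    have hden : (0:ℝ) < 1 - q^7 := by norm_num [hqdef]
    have hle : 2 * (1 - (q^7)^(3*d-2)) / (1 - q^7) ≤ 2 / (1 - q^7) := by
      rw [div_le_div_iff₀ hden hden]
      nlinarith
    have hnum : (q ^ (-9:ℤ) + 2 * q ^ (-8:ℤ) + 2 * q ^ (-5:ℤ)) + 2 / (1 - q^7) ≤ 13.4 := by
      rw [hqdef]
      rw [show (-9:ℤ) = -(9:ℕ) by norm_num, show (-8:ℤ) = -(8:ℕ) by norm_num,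
        show (-5:ℤ) = -(5:ℕ) by norm_num]
      rw [zpow_neg, zpow_neg, zpow_neg, zpow_natCast, zpow_natCast, zpow_natCast]
      norm_num
    linarith
  have hpos : (0:ℝ) ≤ ∑ k ∈ Icc (-K) K, q ^ (k ^ 2 - 9) :=
    Finset.sum_nonneg fun k _ => le_of_lt (zpow_pos hq0 _)
  have hfinal : (S.card : ℝ) < ((15:ℕ) : ℝ) ^ d := by
    calc (S.card : ℝ) ≤ (∑ k ∈ Icc (-K) K, q ^ (k ^ 2 - 9)) ^ d := hcard_real
      _ ≤ (13.4:ℝ) ^ d := pow_le_pow_left₀ hpos hsum_le d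
      _ < ((15:ℕ):ℝ) ^ d := by
          apply pow_lt_pow_left₀ (by norm_num) (by norm_num)
          exact Nat.one_le_iff_ne_zero.mp (le_trans (by norm_num) hd)
  have hScard : S.card < 15 ^ d := by exact_mod_cast hfinal
  exact lt_of_le_of_lt hncard hScard
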